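/- Let a : ℝ → ℝ be continuous with a(x) > 0 for all x, let H : ℝ × ℝ → ℝ be continuous and, for every R > 0, Lipschitz in its first argument on [-R,R] × ℝ with constant C_R. Suppose f₁, f₂ : ℝ → ℝ are bounded C¹ functions satisfying a(x)·f₁'(x) + H(f₁(x), x) = a(x)·f₂'(x) + H(f₂(x), x) for all x, and inf_{x ∈ ℝ} (f₂(x) - f₁(x)) = 0. Then for every δ > 0 and y₀ > 0 there exist L₁ < L₂ such that ∫_{L₁}^{L₂} dx / a(x) = y₀ and 0 ≤ f₂(x) - f₁(x) ≤ δ for all x ∈ [L₁, L₂]. -/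

import Mathlib

open Set Filter MeasureTheory intervalIntegral

/-- Lemma A.8 (Lemma `lem:charac`): if two bounded C¹ solutions of the same first-order
ODE have infimum gap 0, then on intervals of any prescribed `1/a`-length the gap is ≤ δ. -/
theorem stmt0
    (a : ℝ → ℝ) (ha_cont : Continuous a) (ha_pos : ∀ x, 0 < a x) (ha_le : ∀ x, a x ≤ 1)
    (H : ℝ → ℝ → ℝ) (hH_cont : Continuous (fun q : ℝ × ℝ => H q.1 q.2))
    (hH_lip : ∀ R > (0 : ℝ), ∃ C : ℝ, ∀ p ∈ Icc (-R) R, ∀ q ∈ Icc (-R) R, ∀ x : ℝ,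
      |H p x - H q x| ≤ C * |p - q|)
    (f₁ f₂ f₁' f₂' : ℝ → ℝ)
    (hf₁ : ∀ x, HasDerivAt f₁ (f₁' x) x) (hf₂ : ∀ x, HasDerivAt f₂ (f₂' x) x)
    (hf₁c : Continuous f₁') (hf₂c : Continuous f₂')
    (hb₁ : ∃ B, ∀ x, |f₁ x| ≤ B) (hb₂ : ∃ B, ∀ x, |f₂ x| ≤ B)
    (heq : ∀ x, a x * f₁' x + H (f₁ x) x = a x * f₂' x + H (f₂ x) x)
    (hinf : IsGLB (Set.range fun x => f₂ x - f₁ x) 0) :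
    ∀ δ > (0 : ℝ), ∀ y₀ > (0 : ℝ), ∃ L₁ L₂ : ℝ, L₁ < L₂ ∧
      (∫ x in L₁..L₂, 1 / a x) = y₀ ∧
      ∀ x ∈ Icc L₁ L₂, 0 ≤ f₂ x - f₁ x ∧ f₂ x - f₁ x ≤ δ := by
  intro δ hδ y₀ hy₀
  set g : ℝ → ℝ := fun x => f₂ x - f₁ x with hg_def
  have hg0 : ∀ x, 0 ≤ g x := fun x => hinf.1 (Set.mem_range_self x)
  have hg' : ∀ x, HasDerivAt g (f₂' x - f₁' x) x := fun x => (hf₂ x).sub (hf₁ x)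
  obtain ⟨B₁, hB₁⟩ := hb₁
  obtain ⟨B₂, hB₂⟩ := hb₂
  set R : ℝ := max B₁ B₂ + 1 with hR_def
  have hB₁0 : 0 ≤ B₁ := le_trans (abs_nonneg _) (hB₁ 0)
  have hR : 0 < R := by
    have := le_max_left B₁ B₂; simp only [hR_def]; linarith
  obtain ⟨C₀, hC₀⟩ := hH_lip R hR
  set C : ℝ := max C₀ 0 with hC_def
  have hC : 0 ≤ C := le_max_right _ _
  have hmem₁ : ∀ x, f₁ x ∈ Icc (-R) R := by
    intro x
    have h := abs_le.mp (hB₁ x)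
    have := le_max_left B₁ B₂
    constructor <;> simp only [hR_def] <;> linarith
  have hmem₂ : ∀ x, f₂ x ∈ Icc (-R) R := by
    intro x
    have h := abs_le.mp (hB₂ x)
    have := le_max_right B₁ B₂
    constructor <;> simp only [hR_def] <;> linarith
  have key : ∀ x, a x * |f₂' x - f₁' x| ≤ C * g x := by
    intro x
    have h1 : a x * (f₂' x - f₁' x) = H (f₁ x) x - H (f₂ x) x := by
      have := heq x; ring_nf; ring_nf at this; linarith
    have h2 : |H (f₁ x) x - H (f₂ x) x| ≤ C₀ * |f₁ x - f₂ x| :=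
      hC₀ _ (hmem₁ x) _ (hmem₂ x) x
    have h3 : |f₁ x - f₂ x| = g x := by
      rw [abs_sub_comm]; exact abs_of_nonneg (hg0 x)
    have h4 : |a x * (f₂' x - f₁' x)| ≤ C₀ * g x := by rw [h1, ← h3]; exact h2
    rw [abs_mul, abs_of_pos (ha_pos x)] at h4
    have : C₀ * g x ≤ C * g x :=
      mul_le_mul_of_nonneg_right (le_max_left _ _) (hg0 x)
    linarith
  have key2 : ∀ x, a x * (f₂' x - f₁' x) ≤ C * g x ∧
      -(C * g x) ≤ a x * (f₂' x - f₁' x) := by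
    intro x
    have h := key x
    have h1 := neg_abs_le (f₂' x - f₁' x)
    have h2 := le_abs_self (f₂' x - f₁' x)
    have ha := ha_pos x
    constructor <;> nlinarith
  -- the function y
  set y : ℝ → ℝ := fun x => ∫ t in (0:ℝ)..x, 1 / a t with hy_def
  have hia : Continuous fun t => 1 / a t :=
    continuous_const.div ha_cont (fun t => (ha_pos t).ne')
  have hy : ∀ x, HasDerivAt y (1 / a x) x := fun x =>
    (hia.integral_hasStrictDerivAt 0 x).hasDerivAt
  have hyc : Continuous y :=
    continuous_iff_continuousAt.mpr fun x => (hy x).continuousAt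
  have hysub : ∀ u v : ℝ, y v - y u = ∫ t in u..v, 1 / a t := by
    intro u v
    simp only [hy_def]
    exact integral_interval_sub_left (hia.intervalIntegrable 0 v) (hia.intervalIntegrable 0 u)
  have hgrow : ∀ u v : ℝ, u ≤ v → v - u ≤ y v - y u := by
    intro u v huv
    rw [hysub]
    have h1 : (∫ t in u..v, (1:ℝ)) ≤ ∫ t in u..v, 1 / a t := by
      apply integral_mono_on huv (intervalIntegrable_const) (hia.intervalIntegrable u v)
      intro x _
      rw [le_div_iff₀ (ha_pos x)]
      simpa using ha_le x
    simpa using h1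
  have hymono : Monotone y := fun u v h => by nlinarith [hgrow u v h]
  -- monotone auxiliary functions
  set φ : ℝ → ℝ := fun x => g x * Real.exp (-(C * y x)) with hφ_def
  set ψ : ℝ → ℝ := fun x => g x * Real.exp (C * y x) with hψ_def
  have hφ' : ∀ x, HasDerivAt φ
      ((f₂' x - f₁' x) * Real.exp (-(C * y x)) +
        g x * (Real.exp (-(C * y x)) * (-(C * (1 / a x))))) x := by
    intro x
    exact (hg' x).mul (((hy x).const_mul C).neg.exp)
  have hψ' : ∀ x, HasDerivAt ψ
      ((f₂' x - f₁' x) * Real.exp (C * y x) +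
        g x * (Real.exp (C * y x) * (C * (1 / a x)))) x := by
    intro x
    exact (hg' x).mul (((hy x).const_mul C).exp)
  have hφanti : Antitone φ := by
    apply antitone_of_deriv_nonpos (fun x => (hφ' x).differentiableAt)
    intro x
    rw [(hφ' x).deriv]
    have ha := ha_pos x
    have hE := Real.exp_pos (-(C * y x))
    have hk := (key2 x).1
    have hd : (f₂' x - f₁' x) * Real.exp (-(C * y x)) +
        g x * (Real.exp (-(C * y x)) * (-(C * (1 / a x)))) =
        (Real.exp (-(C * y x)) / a x) * (a x * (f₂' x - f₁' x) - C * g x) := by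
      field_simp
      ring
    rw [hd]
    exact mul_nonpos_of_nonneg_of_nonpos (div_nonneg hE.le ha.le) (by linarith)
  have hψmono : Monotone ψ := by
    apply monotone_of_deriv_nonneg (fun x => (hψ' x).differentiableAt)
    intro x
    rw [(hψ' x).deriv]
    have ha := ha_pos x
    have hE := Real.exp_pos (C * y x)
    have hk := (key2 x).2
    have hd : (f₂' x - f₁' x) * Real.exp (C * y x) +
        g x * (Real.exp (C * y x) * (C * (1 / a x))) =
        (Real.exp (C * y x) / a x) * (a x * (f₂' x - f₁' x) + C * g x) := by
      field_simp
    rw [hd]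
    exact mul_nonneg (div_nonneg hE.le ha.le) (by linarith)
  -- pick x₀ with small gap
  have hε : (0:ℝ) < δ * Real.exp (-(C * y₀)) := mul_pos hδ (Real.exp_pos _)
  obtain ⟨v, hv_mem, -, hvlt⟩ := hinf.exists_between hε
  obtain ⟨x₀, hx₀⟩ := hv_mem
  rw [← hx₀] at hvlt  -- hvlt : g x₀ < δ * exp(-(C*y₀))  (variable name?)
  -- find L₂
  obtain ⟨L₂, hL₂mem, hL₂val⟩ :=
    intermediate_value_Icc (show x₀ ≤ x₀ + y₀ by linarith) hyc.continuousOn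
      (show y x₀ + y₀/2 ∈ Icc (y x₀) (y (x₀ + y₀)) by
        constructor
        · linarith
        · have := hgrow x₀ (x₀ + y₀) (by linarith); linarith)
  obtain ⟨L₁, hL₁mem, hL₁val⟩ :=
    intermediate_value_Icc (show x₀ - y₀ ≤ x₀ by linarith) hyc.continuousOn
      (show y x₀ - y₀/2 ∈ Icc (y (x₀ - y₀)) (y x₀) by
        constructor
        · have := hgrow (x₀ - y₀) x₀ (by linarith); linarith
        · linarith)
  have hL₁L₂ : L₁ < L₂ := by
    by_contra h
    push_neg at h
    have := hymono h
    rw [hL₁val, hL₂val] at this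
    linarith
  refine ⟨L₁, L₂, hL₁L₂, ?_, ?_⟩
  · rw [← hysub, hL₁val, hL₂val]; ring
  · intro x hx
    refine ⟨hg0 x, ?_⟩
    have hx₀L₁ : L₁ ≤ x₀ := hL₁mem.2
    have hx₀L₂ : x₀ ≤ L₂ := hL₂mem.1
    rcases le_total x x₀ with hxx₀ | hxx₀
    · -- use ψ monotone
      have h1 : ψ x ≤ ψ x₀ := hψmono hxx₀
      simp only [hψ_def] at h1
      have hyx : y x₀ - y x ≤ y₀ := by
        have := hymono hx.1
        rw [hL₁val] at this
        linarith
      have h2 : Real.exp (C * y x₀) ≤ Real.exp (C * y₀) * Real.exp (C * y x) := by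
        rw [← Real.exp_add]
        apply Real.exp_le_exp.mpr
        nlinarith
      have h3 : g x₀ * Real.exp (C * y x₀) ≤ (g x₀ * Real.exp (C * y₀)) * Real.exp (C * y x) := by
        have := mul_le_mul_of_nonneg_left h2 (hg0 x₀)
        linarith [this]
      have h5 : g x₀ * Real.exp (C * y₀) ≤ δ := by
        have heq1 : δ * Real.exp (-(C * y₀)) * Real.exp (C * y₀) = δ := by
          rw [mul_assoc, ← Real.exp_add]; simp
        nlinarith [Real.exp_pos (C * y₀)]
      have h6 : g x * Real.exp (C * y x) ≤ δ * Real.exp (C * y x) := by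
        calc g x * Real.exp (C * y x) ≤ g x₀ * Real.exp (C * y x₀) := h1
          _ ≤ (g x₀ * Real.exp (C * y₀)) * Real.exp (C * y x) := h3
          _ ≤ δ * Real.exp (C * y x) :=
            mul_le_mul_of_nonneg_right h5 (Real.exp_pos _).le
      exact le_of_mul_le_mul_right h6 (Real.exp_pos _)
    · -- use φ antitone
      have h1 : φ x ≤ φ x₀ := hφanti hxx₀
      simp only [hφ_def] at h1
      have hyx : y x - y x₀ ≤ y₀ := by
        have := hymono hx.2
        rw [hL₂val] at this
        linarith
      have h2 : Real.exp (-(C * y x₀)) ≤ Real.exp (C * y₀) * Real.exp (-(C * y x)) := by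
        rw [← Real.exp_add]
        apply Real.exp_le_exp.mpr
        nlinarith
      have h3 : g x₀ * Real.exp (-(C * y x₀)) ≤
          (g x₀ * Real.exp (C * y₀)) * Real.exp (-(C * y x)) := by
        have := mul_le_mul_of_nonneg_left h2 (hg0 x₀)
        linarith [this]
      have h5 : g x₀ * Real.exp (C * y₀) ≤ δ := by
        have heq1 : δ * Real.exp (-(C * y₀)) * Real.exp (C * y₀) = δ := by
          rw [mul_assoc, ← Real.exp_add]; simp
        nlinarith [Real.exp_pos (C * y₀)]
      have h6 : g x * Real.exp (-(C * y x)) ≤ δ * Real.exp (-(C * y x)) := by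
        calc g x * Real.exp (-(C * y x)) ≤ g x₀ * Real.exp (-(C * y x₀)) := h1
          _ ≤ (g x₀ * Real.exp (C * y₀)) * Real.exp (-(C * y x)) := h3
          _ ≤ δ * Real.exp (-(C * y x)) :=
            mul_le_mul_of_nonneg_right h5 (Real.exp_pos _).le
      exact le_of_mul_le_mul_right h6 (Real.exp_pos _)
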